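/- Let Y⁰ = Σ_{k=1}^K c_k a(f_k) φ_k with distinct frequencies f_k ∈ [0,1), c_k > 0, and unit-norm row vectors φ_k ∈ ℂ^{1×L}. If 2K < spark(A¹_Ω) − 1 + rank(Y⁰_Ω), then Y⁰ is the unique minimizer of min_Y ‖Y‖_{A,0} subject to Y_Ω = Y⁰_Ω, and moreover K = ‖Y⁰‖_{A,0} and the atomic decomposition of Y⁰ into K atoms is unique. -/

import Mathlib

open Complex Matrix Finset

/-- The atom `a(f) = (1, e^{i2πf}, …, e^{i2π(N-1)f})` as a vector in `ℂ^N`. -/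
noncomputable def atom (N : ℕ) (f : ℝ) : Fin N → ℂ :=
  fun j => Complex.exp (2 * Real.pi * Complex.I * ((j : ℕ) : ℂ) * (f : ℂ))

/-- Restriction of the atom to the index set `Ω`. -/
noncomputable def atomRes (N : ℕ) (Ω : Finset (Fin N)) (f : ℝ) : Ω → ℂ :=
  fun m => atom N f (m : Fin N)

/-- Spark of the continuous dictionary `A¹_Ω`: the smallest number of distinct atoms
`a_Ω(f)` with `f ∈ [0,1)` that are linearly dependent. -/
noncomputable def spark (N : ℕ) (Ω : Finset (Fin N)) : ℕ :=
  sInf {k | ∃ S : Finset ℝ, S.card = k ∧ (↑S : Set ℝ) ⊆ Set.Ico (0 : ℝ) 1 ∧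
    ¬ LinearIndependent ℂ (fun f : S => atomRes N Ω (f : ℝ))}

/-- The atomic `ℓ₀` norm of `Y ∈ ℂ^{N×L}`: the smallest number of atoms `a(f)φ`
(with `f ∈ [0,1)`, `‖φ‖₂ = 1` and positive coefficients) summing to `Y`. -/
noncomputable def AL0 (N L : ℕ) (Y : Matrix (Fin N) (Fin L) ℂ) : ℕ :=
  sInf {K | ∃ (c : Fin K → ℝ) (f : Fin K → ℝ) (φ : Fin K → Fin L → ℂ),
    (∀ k, 0 < c k) ∧ (∀ k, f k ∈ Set.Ico (0 : ℝ) 1) ∧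
    (∀ k, ∑ l, Complex.normSq (φ k l) = 1) ∧
    (∀ j l, Y j l = ∑ k, (c k : ℂ) * atom N (f k) j * φ k l)}

/-- The rows of `Y` indexed by `Ω`. -/
def rowsRes {N L : ℕ} (Ω : Finset (Fin N)) (Y : Matrix (Fin N) (Fin L) ℂ) :
    Matrix Ω (Fin L) ℂ := fun m l => Y (m : Fin N) l

section AuxLemmas

lemma atom_apply_eq_pow (N : ℕ) (f : ℝ) (j : Fin N) :
    atom N f j = Complex.exp (2 * Real.pi * Complex.I * (f : ℂ)) ^ (j : ℕ) := by
  rw [atom, ← Complex.exp_nat_mul]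
  congr 1
  ring


lemma expfreq_inj {x y : ℝ} (hx : x ∈ Set.Ico (0:ℝ) 1) (hy : y ∈ Set.Ico (0:ℝ) 1)
    (h : Complex.exp (2 * Real.pi * Complex.I * (x:ℂ)) = Complex.exp (2 * Real.pi * Complex.I * (y:ℂ))) :
    x = y := by
  rw [Complex.exp_eq_exp_iff_exists_int] at h
  obtain ⟨n, hn⟩ := h
  have h2 : ((x - y - n : ℝ) : ℂ) * (2 * Real.pi * Complex.I) = 0 := by
    push_cast
    linear_combination hn
  have h3 : (2 * (Real.pi:ℂ) * Complex.I) ≠ 0 := by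
    simp [Real.pi_ne_zero, Complex.I_ne_zero]
  rcases mul_eq_zero.mp h2 with h4 | h4
  · have h5 : (x - y - n : ℝ) = 0 := by exact_mod_cast h4
    have h6 : (n : ℝ) = x - y := by linarith
    have h7 : n = 0 := by
      have hlt : (n : ℝ) < 1 := by rw [h6]; rcases hx with ⟨hx0, hx1⟩; rcases hy with ⟨hy0, hy1⟩; linarith
      have hgt : (-1 : ℝ) < n := by rw [h6]; rcases hx with ⟨hx0, hx1⟩; rcases hy with ⟨hy0, hy1⟩; linarith
      have : n < 1 := by exact_mod_cast hlt
      have : (-1 : ℤ) < n := by exact_mod_cast hgt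
      omega
    rw [h7] at h6
    simp at h6
    linarith
  · exact absurd h4 (by ring_nf; ring_nf at h3; exact h3)


lemma normalize_vec {L : ℕ} (v : Fin L → ℂ) (hv : v ≠ 0) :
    ∃ (C : ℝ) (φ : Fin L → ℂ), 0 < C ∧ (∑ l, Complex.normSq (φ l)) = 1 ∧ ∀ l, v l = (C:ℂ) * φ l := by
  have hex : ∃ l, v l ≠ 0 := by
    by_contra h
    push_neg at h
    exact hv (funext h)
  obtain ⟨l0, hl0⟩ := hex
  set s : ℝ := ∑ l, Complex.normSq (v l) with hs
  have hspos : 0 < s := by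
    apply Finset.sum_pos' (fun l _ => Complex.normSq_nonneg _) ⟨l0, Finset.mem_univ _, ?_⟩
    simpa [Complex.normSq_pos] using hl0
  set C : ℝ := Real.sqrt s with hC
  have hCpos : 0 < C := Real.sqrt_pos.mpr hspos
  refine ⟨C, fun l => v l / (C:ℂ), hCpos, ?_, ?_⟩
  · have : ∀ l, Complex.normSq (v l / (C:ℂ)) = Complex.normSq (v l) / s := by
      intro l
      rw [Complex.normSq_div, Complex.normSq_ofReal, hC]
      rw [show Real.sqrt s * Real.sqrt s = s from Real.mul_self_sqrt hspos.le]
    rw [Finset.sum_congr rfl (fun l _ => this l), ← Finset.sum_div]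
    rw [← hs]
    field_simp
  · intro l
    have hCne : (C:ℂ) ≠ 0 := by exact_mod_cast hCpos.ne'
    field_simp

lemma fiber_sum {K : ℕ} (g : Fin K → ℝ) (w : Fin K → ℂ) (T : Finset ℝ) (hT : ∀ k, g k ∈ T)
    (a : ℝ → ℂ) :
    ∑ t ∈ T, a t * ∑ k ∈ univ.filter (fun k => g k = t), w k = ∑ k, a (g k) * w k := by
  rw [← Finset.sum_fiberwise_of_maps_to (fun k _ => hT k) (fun k => a (g k) * w k)]
  refine Finset.sum_congr rfl fun t _ => ?_
  rw [Finset.mul_sum]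
  refine Finset.sum_congr rfl fun k hk => ?_
  rw [(Finset.mem_filter.mp hk).2]


lemma matchup {L K K' : ℕ} (c : Fin K → ℝ) (f : Fin K → ℝ) (φ : Fin K → Fin L → ℂ)
    (hc : ∀ k, 0 < c k) (hfdist : Function.Injective f)
    (hφ : ∀ k, ∑ l, Complex.normSq (φ k l) = 1)
    (c' : Fin K' → ℝ) (f' : Fin K' → ℝ) (φ' : Fin K' → Fin L → ℂ)
    (hB : ∀ (t : ℝ) (l : Fin L), (∑ k ∈ univ.filter (fun k => f k = t), (c k : ℂ) * φ k l)
      = ∑ j ∈ univ.filter (fun j => f' j = t), (c' j : ℂ) * φ' j l) :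
    ∀ k0, ∃ j, f' j = f k0 := by
  intro k0
  by_contra h
  push_neg at h
  have hfe : (univ.filter (fun j => f' j = f k0)) = (∅ : Finset (Fin K')) := by
    ext j; simp [h j]
  have hfk : (univ.filter (fun k => f k = f k0)) = ({k0} : Finset (Fin K)) := by
    ext k; simp [hfdist.eq_iff]
  have hz : ∀ l, (c k0 : ℂ) * φ k0 l = 0 := by
    intro l
    have := hB (f k0) l
    rw [hfe, hfk] at this
    simpa using this
  have hφz : ∀ l, φ k0 l = 0 := by
    intro l
    have hcne : ((c k0 : ℝ) : ℂ) ≠ 0 := by exact_mod_cast (hc k0).ne'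
    exact (mul_eq_zero.mp (hz l)).resolve_left hcne
  have := hφ k0
  rw [Finset.sum_congr rfl (fun l _ => by rw [hφz l, Complex.normSq_zero])] at this
  simp at this

lemma mem_AL0_set (N L : ℕ) (Y : Matrix (Fin N) (Fin L) ℂ) :
    {K | ∃ (c : Fin K → ℝ) (f : Fin K → ℝ) (φ : Fin K → Fin L → ℂ),
      (∀ k, 0 < c k) ∧ (∀ k, f k ∈ Set.Ico (0 : ℝ) 1) ∧
      (∀ k, ∑ l, Complex.normSq (φ k l) = 1) ∧
      (∀ j l, Y j l = ∑ k, (c k : ℂ) * atom N (f k) j * φ k l)}.Nonempty := by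
  classical
  rcases Nat.eq_zero_or_pos L with hL | hL
  · subst hL
    exact ⟨0, Fin.elim0, Fin.elim0, Fin.elim0, fun k => k.elim0, fun k => k.elim0,
      fun k => k.elim0, fun j l => l.elim0⟩
  rcases Nat.eq_zero_or_pos N with hN | hN
  · subst hN
    exact ⟨0, Fin.elim0, Fin.elim0, Fin.elim0, fun k => k.elim0, fun k => k.elim0,
      fun k => k.elim0, fun j l => j.elim0⟩
  -- main construction
  set g : Fin N → ℝ := fun n => (n : ℝ) / (N : ℝ) with hgdef
  have hg : ∀ n : Fin N, g n ∈ Set.Ico (0:ℝ) 1 := by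
    intro n
    constructor
    · positivity
    · rw [div_lt_one (by exact_mod_cast hN)]
      exact_mod_cast n.2
  set z : Fin N → ℂ := fun n => Complex.exp (2 * Real.pi * Complex.I * (g n : ℂ)) with hzdef
  have hz : Function.Injective z := fun a b h => by
    have := expfreq_inj (hg a) (hg b) h
    have hNne : (N:ℝ) ≠ 0 := by exact_mod_cast hN.ne'
    have : (a : ℝ) = b := by
      have h' : ((a : ℕ) : ℝ) / (N : ℝ) = ((b : ℕ) : ℝ) / (N : ℝ) := this
      exact_mod_cast (div_left_inj' hNne).mp h'
    exact Fin.ext (by exact_mod_cast this)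
  set V : Matrix (Fin N) (Fin N) ℂ := (Matrix.vandermonde z)ᵀ with hVdef
  have hdet : IsUnit V.det := by
    rw [hVdef, Matrix.det_transpose, Matrix.det_vandermonde]
    rw [isUnit_iff_ne_zero]
    rw [Finset.prod_ne_zero_iff]
    intro i _
    rw [Finset.prod_ne_zero_iff]
    intro j hj
    have : i ≠ j := (Finset.mem_Ioi.mp hj).ne
    exact sub_ne_zero.mpr fun hh => this (hz hh.symm)
  set ψ : Matrix (Fin N) (Fin L) ℂ := V⁻¹ * Y with hψdef
  have hYV : ∀ j l, Y j l = ∑ n, V j n * ψ n l := by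
    intro j l
    have : V * ψ = Y := by
      rw [hψdef, ← Matrix.mul_assoc, Matrix.mul_nonsing_inv _ hdet, Matrix.one_mul]
    conv_lhs => rw [← this]
    rw [Matrix.mul_apply]
  -- split rows into two nonzero pieces
  set e0 : Fin L → ℂ := fun l => if l = ⟨0, hL⟩ then 1 else 0 with he0def
  have he0 : e0 ≠ 0 := by
    intro h
    have := congrFun h ⟨0, hL⟩
    simp [he0def] at this
  set w : Fin N → Fin L → ℂ := fun n => if (fun l => ψ n l) = (fun l => -e0 l) then (fun l => 2 * e0 l) else e0 with hwdef
  have hv2 : ∀ n, (fun l => -(w n l)) ≠ 0 := by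
    intro n h
    apply he0
    funext l
    have := congrFun h l
    by_cases hcase : (fun l => ψ n l) = (fun l => -e0 l) <;>
      simp [hwdef, hcase] at this ⊢ <;> simpa using this
  have hv1 : ∀ n, (fun l => ψ n l + w n l) ≠ 0 := by
    intro n h
    by_cases hcase : (fun l => ψ n l) = (fun l => -e0 l)
    · apply he0
      funext l
      have h1 := congrFun h l
      have h2 := congrFun hcase l
      simp [hwdef, hcase] at h1
      simp only [Pi.zero_apply]
      linear_combination h1
    · apply hcase
      funext l
      have h1 := congrFun h l
      simp [hwdef, hcase] at h1
      show ψ n l = -e0 l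
      linear_combination h1
  have H1 : ∀ n, ∃ (C : ℝ) (φv : Fin L → ℂ), 0 < C ∧ (∑ l, Complex.normSq (φv l)) = 1 ∧
      ∀ l, ψ n l + w n l = (C:ℂ) * φv l := fun n => normalize_vec _ (hv1 n)
  have H2 : ∀ n, ∃ (C : ℝ) (φv : Fin L → ℂ), 0 < C ∧ (∑ l, Complex.normSq (φv l)) = 1 ∧
      ∀ l, -(w n l) = (C:ℂ) * φv l := fun n => normalize_vec _ (hv2 n)
  choose C1 φ1 hC1 hφ1 hval1 using H1
  choose C2 φ2 hC2 hφ2 hval2 using H2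
  refine ⟨N + N, fun i => Sum.elim C1 C2 (finSumFinEquiv.symm i),
    fun i => Sum.elim g g (finSumFinEquiv.symm i),
    fun i => Sum.elim φ1 φ2 (finSumFinEquiv.symm i), ?_, ?_, ?_, ?_⟩
  · intro i; rcases hi : finSumFinEquiv.symm i with n | n <;> simp [hi, hC1, hC2]
  · intro i; rcases hi : finSumFinEquiv.symm i with n | n <;> simp [hi, hg]
  · intro i; rcases hi : finSumFinEquiv.symm i with n | n <;> simp [hi, hφ1, hφ2]
  · intro j l
    rw [← Equiv.sum_comp finSumFinEquiv
      (fun i => ((Sum.elim C1 C2 (finSumFinEquiv.symm i) : ℝ) : ℂ) *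
        atom N (Sum.elim g g (finSumFinEquiv.symm i)) j * Sum.elim φ1 φ2 (finSumFinEquiv.symm i) l)]
    rw [Fintype.sum_sum_type]
    simp only [Equiv.symm_apply_apply, Sum.elim_inl, Sum.elim_inr]
    symm
    have hVatom : ∀ n, atom N (g n) j = V j n := by
      intro n
      rw [atom_apply_eq_pow]
      rfl
    calc (∑ n, ((C1 n : ℝ) : ℂ) * atom N (g n) j * φ1 n l)
          + ∑ n, ((C2 n : ℝ) : ℂ) * atom N (g n) j * φ2 n l
        = ∑ n, atom N (g n) j * ((C1 n : ℂ) * φ1 n l + (C2 n : ℂ) * φ2 n l) := by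
          rw [← Finset.sum_add_distrib]; refine Finset.sum_congr rfl fun n _ => by ring
      _ = ∑ n, atom N (g n) j * (ψ n l) := by
          refine Finset.sum_congr rfl fun n _ => ?_
          rw [← hval1 n l, ← hval2 n l]; ring
      _ = ∑ n, V j n * ψ n l := by
          refine Finset.sum_congr rfl fun n _ => by rw [hVatom n]
      _ = Y j l := (hYV j l).symm

lemma core {N L K K' : ℕ} (Ω : Finset (Fin N))
    (c : Fin K → ℝ) (f : Fin K → ℝ) (φ : Fin K → Fin L → ℂ)
    (hf : ∀ k, f k ∈ Set.Ico (0 : ℝ) 1)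
    (c' : Fin K' → ℝ) (f' : Fin K' → ℝ) (φ' : Fin K' → Fin L → ℂ)
    (hf' : ∀ k, f' k ∈ Set.Ico (0 : ℝ) 1)
    (Y0 : Matrix (Fin N) (Fin L) ℂ)
    (hY0 : ∀ j l, Y0 j l = ∑ k, (c k : ℂ) * atom N (f k) j * φ k l)
    (hK' : K' ≤ K)
    (hagree : ∀ m ∈ Ω, ∀ l, (∑ k, (c k : ℂ) * atom N (f k) m * φ k l)
        = ∑ j, (c' j : ℂ) * atom N (f' j) m * φ' j l)
    (hK : 2 * K + 1 < spark N Ω + (rowsRes Ω Y0).rank) :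
    ∀ (t : ℝ) (l : Fin L), (∑ k ∈ univ.filter (fun k => f k = t), (c k : ℂ) * φ k l)
      = ∑ j ∈ univ.filter (fun j => f' j = t), (c' j : ℂ) * φ' j l := by
  classical
  set F : Finset ℝ := Finset.image f Finset.univ with hFdef
  set F' : Finset ℝ := Finset.image f' Finset.univ with hF'def
  set T : Finset ℝ := F ∪ F' with hTdef
  set S0 : ℝ → Fin L → ℂ := fun t l => ∑ k ∈ univ.filter (fun k => f k = t), (c k : ℂ) * φ k l
    with hS0def
  set S1 : ℝ → Fin L → ℂ := fun t l => ∑ j ∈ univ.filter (fun j => f' j = t), (c' j : ℂ) * φ' j l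
    with hS1def
  have hfT : ∀ k, f k ∈ T := fun k => Finset.mem_union_left _ (Finset.mem_image_of_mem f (mem_univ k))
  have hf'T : ∀ j, f' j ∈ T := fun j => Finset.mem_union_right _ (Finset.mem_image_of_mem f' (mem_univ j))
  have hTIco : (↑T : Set ℝ) ⊆ Set.Ico (0:ℝ) 1 := by
    intro t ht
    rw [Finset.coe_union, Set.mem_union] at ht
    rcases ht with ht | ht
    · obtain ⟨k, _, rfl⟩ := Finset.mem_image.mp ht
      exact hf k
    · obtain ⟨j, _, rfl⟩ := Finset.mem_image.mp ht
      exact hf' j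
  -- key identity on Ω
  have key : ∀ m : Fin N, m ∈ Ω → ∀ l, ∑ t ∈ T, atom N t m * (S0 t l - S1 t l) = 0 := by
    intro m hm l
    have e0 : ∑ t ∈ T, atom N t m * S0 t l = ∑ k, (c k : ℂ) * atom N (f k) m * φ k l := by
      rw [show (∑ k, (c k : ℂ) * atom N (f k) m * φ k l)
          = ∑ k, atom N (f k) m * ((c k : ℂ) * φ k l) from Finset.sum_congr rfl fun k _ => by ring]
      rw [← fiber_sum f (fun k => (c k : ℂ) * φ k l) T hfT (fun t => atom N t m)]
    have e1 : ∑ t ∈ T, atom N t m * S1 t l = ∑ j, (c' j : ℂ) * atom N (f' j) m * φ' j l := by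
      rw [show (∑ j, (c' j : ℂ) * atom N (f' j) m * φ' j l)
          = ∑ j, atom N (f' j) m * ((c' j : ℂ) * φ' j l) from Finset.sum_congr rfl fun j _ => by ring]
      rw [← fiber_sum f' (fun j => (c' j : ℂ) * φ' j l) T hf'T (fun t => atom N t m)]
    calc ∑ t ∈ T, atom N t m * (S0 t l - S1 t l)
        = (∑ t ∈ T, atom N t m * S0 t l) - ∑ t ∈ T, atom N t m * S1 t l := by
          rw [← Finset.sum_sub_distrib]; exact Finset.sum_congr rfl fun t _ => by ring
      _ = 0 := by rw [e0, e1, hagree m hm l, sub_self]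
  -- the atoms over T are linearly independent
  have hindep : LinearIndependent ℂ (fun t : T => atomRes N Ω (t : ℝ)) := by
    by_contra hdep
    -- matrices
    set Amat : Matrix Ω T ℂ := Matrix.of (fun m t => atom N (t : ℝ) (m : Fin N)) with hAmat
    set Bmat : Matrix T (Fin L) ℂ := Matrix.of (fun t l => S0 (t : ℝ) l - S1 (t : ℝ) l) with hBmat
    set B1mat : Matrix T (Fin L) ℂ := Matrix.of (fun t l => S1 (t : ℝ) l) with hB1mat
    have hAB : Amat * Bmat = 0 := by
      ext m l
      rw [Matrix.mul_apply]
      have := Finset.sum_coe_sort T (fun t => atom N t (m : Fin N) * (S0 t l - S1 t l))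
      calc ∑ t : T, Amat m t * Bmat t l
          = ∑ t ∈ T, atom N t (m : Fin N) * (S0 t l - S1 t l) := this
        _ = 0 := key m m.2 l
      |>.trans (Matrix.zero_apply m l).symm
    -- spark ≤ Amat.rank + 1
    have hPow : ((T.powerset).filter
        (fun S : Finset ℝ => ¬ LinearIndependent ℂ (fun x : S => atomRes N Ω (x : ℝ)))).Nonempty :=
      ⟨T, Finset.mem_filter.mpr ⟨Finset.mem_powerset_self T, hdep⟩⟩
    obtain ⟨S, hSmem, hSmin⟩ := Finset.exists_min_image _ Finset.card hPow
    rw [Finset.mem_filter, Finset.mem_powerset] at hSmem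
    obtain ⟨hST, hSdep⟩ := hSmem
    have hSne : S.Nonempty := by
      rcases Finset.eq_empty_or_nonempty S with rfl | h
      · exact absurd linearIndependent_empty_type hSdep
      · exact h
    obtain ⟨t0, ht0⟩ := hSne
    have herase : LinearIndependent ℂ (fun x : (S.erase t0) => atomRes N Ω (x : ℝ)) := by
      by_contra hd
      have hmem2 : S.erase t0 ∈ (T.powerset).filter
          (fun S : Finset ℝ => ¬ LinearIndependent ℂ (fun x : S => atomRes N Ω (x : ℝ))) :=
        Finset.mem_filter.mpr ⟨Finset.mem_powerset.mpr ((Finset.erase_subset _ _).trans hST), hd⟩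
      have h1 := hSmin _ hmem2
      have hlt : (S.erase t0).card < S.card := Finset.card_erase_lt_of_mem ht0
      omega
    have hsparkle : spark N Ω ≤ S.card :=
      Nat.sInf_le ⟨S, rfl, (Finset.coe_subset.mpr hST).trans hTIco, hSdep⟩
    set Vsp := Submodule.span ℂ (Set.range Amatᵀ) with hVsp
    have hmemV : ∀ x : (S.erase t0), atomRes N Ω (x : ℝ) ∈ Vsp := by
      intro x
      apply Submodule.subset_span
      exact ⟨⟨(x : ℝ), hST (Finset.mem_of_mem_erase x.2)⟩, rfl⟩
    have hlift : LinearIndependent ℂ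
        (fun x : (S.erase t0) => (⟨atomRes N Ω (x:ℝ), hmemV x⟩ : Vsp)) :=
      LinearIndependent.of_comp Vsp.subtype herase
    have hcard1 : (S.erase t0).card ≤ Amat.rank := by
      have h2 := hlift.fintype_card_le_finrank
      rw [Fintype.card_coe] at h2
      rw [Matrix.rank_eq_finrank_span_cols]
      exact h2
    have hScard : S.card ≤ Amat.rank + 1 := by
      have h3 := Finset.card_erase_of_mem ht0
      have hpos : 0 < S.card := Finset.card_pos.mpr ⟨t0, ht0⟩
      omega
    have hABr : Amat.rank + Bmat.rank ≤ T.card := by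
      have h4 := Matrix.rank_add_rank_le_card_of_mul_eq_zero hAB
      rwa [Fintype.card_coe] at h4
    have hY0mat : rowsRes Ω Y0 = Amat * B1mat := by
      ext m l
      show Y0 (m : Fin N) l = _
      rw [Matrix.mul_apply]
      have hcoe : ∑ t : T, Amat m t * B1mat t l = ∑ t ∈ T, atom N t (m : Fin N) * S1 t l :=
        Finset.sum_coe_sort T (fun t => atom N t (m:Fin N) * S1 t l)
      rw [hcoe]
      have e1 : ∑ t ∈ T, atom N t (m:Fin N) * S1 t l
          = ∑ j, (c' j : ℂ) * atom N (f' j) (m:Fin N) * φ' j l := by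
        rw [show (∑ j, (c' j:ℂ) * atom N (f' j) (m:Fin N) * φ' j l)
            = ∑ j, atom N (f' j) (m:Fin N) * ((c' j:ℂ) * φ' j l) from
          Finset.sum_congr rfl fun j _ => by ring]
        rw [← fiber_sum f' (fun j => (c' j : ℂ) * φ' j l) T hf'T (fun t => atom N t (m:Fin N))]
      rw [e1, hY0 (m:Fin N) l, hagree (m:Fin N) m.2 l]
    set C : Finset ℝ := F ∩ F' with hCdef
    set Mc : Matrix C (Fin L) ℂ := Matrix.of (fun t l => S1 (t:ℝ) l) with hMcdef
    have hrY : (rowsRes Ω Y0).rank ≤ C.card + Bmat.rank := by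
      rw [hY0mat, Matrix.rank_eq_finrank_span_row]
      have step1 : Submodule.span ℂ (Set.range (Amat * B1mat)) ≤
          Submodule.span ℂ (Set.range Mc) ⊔ Submodule.span ℂ (Set.range Bmat) := by
        rw [Submodule.span_le]
        rintro _ ⟨m, rfl⟩
        have hrow : (Amat * B1mat) m = ∑ t : T, Amat m t • B1mat t := by
          ext l
          rw [Finset.sum_apply, Matrix.mul_apply]
          exact Finset.sum_congr rfl fun t _ => rfl
        rw [hrow]
        refine Submodule.sum_mem _ fun t _ => Submodule.smul_mem _ _ ?_
        by_cases h1 : (t : ℝ) ∈ F'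
        · by_cases h2 : (t : ℝ) ∈ F
          · apply Submodule.mem_sup_left
            apply Submodule.subset_span
            exact ⟨⟨(t:ℝ), Finset.mem_inter.mpr ⟨h2, h1⟩⟩, rfl⟩
          · have hS0z : ∀ l, S0 (t:ℝ) l = 0 := by
              intro l
              have hemp : univ.filter (fun k => f k = (t:ℝ)) = (∅ : Finset (Fin K)) := by
                ext k
                simp only [mem_filter, mem_univ, true_and, Finset.notMem_empty, iff_false]
                intro hk
                exact h2 (hk ▸ Finset.mem_image_of_mem f (mem_univ k))
              show (∑ k ∈ univ.filter (fun k => f k = (t:ℝ)), (c k : ℂ) * φ k l) = 0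
              rw [hemp, Finset.sum_empty]
            have hBneg : B1mat t = -(Bmat t) := by
              ext l
              show S1 (t:ℝ) l = -(S0 (t:ℝ) l - S1 (t:ℝ) l)
              rw [hS0z l]; ring
            rw [hBneg]
            exact Submodule.mem_sup_right (Submodule.neg_mem _ (Submodule.subset_span ⟨t, rfl⟩))
        · have hS1z : ∀ l, S1 (t:ℝ) l = 0 := by
            intro l
            have hemp : univ.filter (fun j => f' j = (t:ℝ)) = (∅ : Finset (Fin K')) := by
              ext j
              simp only [mem_filter, mem_univ, true_and, Finset.notMem_empty, iff_false]
              intro hj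
              exact h1 (hj ▸ Finset.mem_image_of_mem f' (mem_univ j))
            show (∑ j ∈ univ.filter (fun j => f' j = (t:ℝ)), (c' j : ℂ) * φ' j l) = 0
            rw [hemp, Finset.sum_empty]
          have hB10 : B1mat t = 0 := by
            ext l
            show S1 (t:ℝ) l = 0
            exact hS1z l
          rw [hB10]
          exact Submodule.zero_mem _
      have hfin2 : Module.finrank ℂ (Submodule.span ℂ (Set.range Mc)) ≤ C.card := by
        show Module.finrank ℂ (Submodule.span ℂ (Set.range Mc.row)) ≤ C.card
        rw [← Matrix.rank_eq_finrank_span_row Mc]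
        have := Matrix.rank_le_card_height Mc
        rwa [Fintype.card_coe] at this
      calc Module.finrank ℂ (Submodule.span ℂ (Set.range (Amat * B1mat)))
          ≤ Module.finrank ℂ ((Submodule.span ℂ (Set.range Mc)) ⊔ (Submodule.span ℂ (Set.range Bmat)) : Submodule ℂ (Fin L → ℂ)) :=
            Submodule.finrank_mono step1
        _ ≤ Module.finrank ℂ (Submodule.span ℂ (Set.range Mc))
            + Module.finrank ℂ (Submodule.span ℂ (Set.range Bmat)) :=
            Submodule.finrank_add_le_finrank_add_finrank _ _
        _ ≤ C.card + Bmat.rank := by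
            show _ + Module.finrank ℂ (Submodule.span ℂ (Set.range Bmat.row)) ≤ _
            rw [← Matrix.rank_eq_finrank_span_row Bmat]
            exact add_le_add hfin2 le_rfl
    have hTC : T.card + C.card ≤ K + K' := by
      have h1 : T.card + C.card = F.card + F'.card := by
        rw [hTdef, hCdef]
        exact Finset.card_union_add_card_inter F F'
      have h2 : F.card ≤ K := le_trans Finset.card_image_le (by simp)
      have h3 : F'.card ≤ K' := le_trans Finset.card_image_le (by simp)
      omega
    omega
  -- conclude from independence
  intro t l
  by_cases ht : t ∈ T
  · have hzero := Fintype.linearIndependent_iff.mp hindep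
      (fun s : T => S0 (s:ℝ) l - S1 (s:ℝ) l) ?_ ⟨t, ht⟩
    · exact sub_eq_zero.mp hzero
    · ext m
      rw [Finset.sum_apply]
      have hk := key (m:Fin N) m.2 l
      rw [← Finset.sum_coe_sort T (fun t => atom N t (m:Fin N) * (S0 t l - S1 t l))] at hk
      calc ∑ s : T, ((S0 (s:ℝ) l - S1 (s:ℝ) l) • atomRes N Ω (s:ℝ)) m
          = ∑ s : T, atom N (s:ℝ) (m:Fin N) * (S0 (s:ℝ) l - S1 (s:ℝ) l) := by
            refine Finset.sum_congr rfl fun s _ => ?_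
            show (S0 (s:ℝ) l - S1 (s:ℝ) l) * atom N (s:ℝ) (m:Fin N) = _
            ring
        _ = 0 := hk
      |>.trans rfl
  · have h1 : univ.filter (fun k => f k = t) = (∅ : Finset (Fin K)) := by
      ext k
      simp only [mem_filter, mem_univ, true_and, Finset.notMem_empty, iff_false]
      intro hk
      exact ht (Finset.mem_union_left _ (hk ▸ Finset.mem_image_of_mem f (mem_univ k)))
    have h2 : univ.filter (fun j => f' j = t) = (∅ : Finset (Fin K')) := by
      ext j
      simp only [mem_filter, mem_univ, true_and, Finset.notMem_empty, iff_false]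
      intro hj
      exact ht (Finset.mem_union_right _ (hj ▸ Finset.mem_image_of_mem f' (mem_univ j)))
    show (∑ k ∈ univ.filter (fun k => f k = t), (c k : ℂ) * φ k l)
        = ∑ j ∈ univ.filter (fun j => f' j = t), (c' j : ℂ) * φ' j l
    rw [h1, h2, Finset.sum_empty, Finset.sum_empty]


end AuxLemmas
/-- if `2K < spark(A¹_Ω) − 1 + rank(Y⁰_Ω)` (stated as
`2K + 1 < spark + rank`), then `Y⁰` is the unique minimizer of the atomic `ℓ₀` norm
subject to the data constraint, `‖Y⁰‖_{A,0} = K`, and the `K`-atom decomposition is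
unique up to permutation. -/
theorem atomic_l0_exact_recovery (N L K : ℕ) (Ω : Finset (Fin N))
    (c : Fin K → ℝ) (f : Fin K → ℝ) (φ : Fin K → Fin L → ℂ)
    (hc : ∀ k, 0 < c k) (hf : ∀ k, f k ∈ Set.Ico (0 : ℝ) 1)
    (hfdist : Function.Injective f)
    (hφ : ∀ k, ∑ l, Complex.normSq (φ k l) = 1)
    (Y0 : Matrix (Fin N) (Fin L) ℂ)
    (hY0 : ∀ j l, Y0 j l = ∑ k, (c k : ℂ) * atom N (f k) j * φ k l)
    (hK : 2 * K + 1 < spark N Ω + (rowsRes Ω Y0).rank) :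
    (∀ Y : Matrix (Fin N) (Fin L) ℂ,
        (∀ m ∈ Ω, ∀ l, Y m l = Y0 m l) → Y ≠ Y0 → AL0 N L Y0 < AL0 N L Y) ∧
    AL0 N L Y0 = K ∧
    (∀ (c' : Fin K → ℝ) (f' : Fin K → ℝ) (φ' : Fin K → Fin L → ℂ),
      (∀ k, 0 < c' k) → (∀ k, f' k ∈ Set.Ico (0 : ℝ) 1) →
      (∀ k, ∑ l, Complex.normSq (φ' k l) = 1) →
      (∀ j l, Y0 j l = ∑ k, (c' k : ℂ) * atom N (f' k) j * φ' k l) →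
      ∃ σ : Equiv.Perm (Fin K), ∀ k, f' (σ k) = f k ∧ c' (σ k) = c k ∧ φ' (σ k) = φ k) := by
  classical
  have hKmem : ∃ (c0 : Fin K → ℝ) (f0 : Fin K → ℝ) (φ0 : Fin K → Fin L → ℂ),
      (∀ k, 0 < c0 k) ∧ (∀ k, f0 k ∈ Set.Ico (0:ℝ) 1) ∧
      (∀ k, ∑ l, Complex.normSq (φ0 k l) = 1) ∧
      (∀ j l, Y0 j l = ∑ k, (c0 k : ℂ) * atom N (f0 k) j * φ0 k l) :=
    ⟨c, f, φ, hc, hf, hφ, hY0⟩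
  have hle : AL0 N L Y0 ≤ K := Nat.sInf_le hKmem
  have hAL0 : AL0 N L Y0 = K := by
    by_contra hne
    have hlt : AL0 N L Y0 < K := lt_of_le_of_ne hle hne
    obtain ⟨c', f', φ', hc', hf', hφ', hY0'⟩ := Nat.sInf_mem (mem_AL0_set N L Y0)
    have hB := core Ω c f φ hf c' f' φ' hf' Y0 hY0 (le_of_lt hlt)
      (fun m hm l => by rw [← hY0 m l, ← hY0' m l]) hK
    have hsub : Finset.image f Finset.univ ⊆ Finset.image f' Finset.univ := by
      intro t htm
      obtain ⟨k, _, rfl⟩ := Finset.mem_image.mp htm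
      obtain ⟨j, hj⟩ := matchup c f φ hc hfdist hφ c' f' φ' hB k
      exact Finset.mem_image.mpr ⟨j, mem_univ j, hj⟩
    have hcard := Finset.card_le_card hsub
    have e1 : (Finset.image f Finset.univ).card = K := by
      rw [Finset.card_image_of_injective _ hfdist, Finset.card_univ, Fintype.card_fin]
    have e2 : (Finset.image f' Finset.univ).card ≤ AL0 N L Y0 :=
      le_trans Finset.card_image_le
        (le_of_eq (Finset.card_univ.trans (Fintype.card_fin _)))
    have hfinal : K ≤ AL0 N L Y0 :=
      calc K = (Finset.image f Finset.univ).card := e1.symm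
        _ ≤ (Finset.image f' Finset.univ).card := hcard
        _ ≤ AL0 N L Y0 := e2
    exact absurd (lt_of_le_of_lt hfinal hlt) (lt_irrefl K)
  refine ⟨?_, hAL0, ?_⟩
  · intro Y hfeas hne
    by_contra hcon
    push_neg at hcon
    obtain ⟨c', f', φ', hc', hf', hφ', hY'⟩ := Nat.sInf_mem (mem_AL0_set N L Y)
    have hKle : AL0 N L Y ≤ K := by rw [← hAL0]; exact hcon
    have hB := core Ω c f φ hf c' f' φ' hf' Y0 hY0 hKle
      (fun m hm l => by rw [← hY0 m l, ← hY' m l, hfeas m hm l]) hK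
    apply hne
    ext j l
    rw [hY' j l, hY0 j l]
    set T : Finset ℝ := Finset.image f Finset.univ ∪ Finset.image f' Finset.univ with hTdef
    have hfT : ∀ k, f k ∈ T :=
      fun k => Finset.mem_union_left _ (Finset.mem_image_of_mem f (mem_univ k))
    have hf'T : ∀ j, f' j ∈ T :=
      fun j => Finset.mem_union_right _ (Finset.mem_image_of_mem f' (mem_univ j))
    calc ∑ j', (c' j' : ℂ) * atom N (f' j') j * φ' j' l
        = ∑ j', atom N (f' j') j * ((c' j' : ℂ) * φ' j' l) :=
          Finset.sum_congr rfl fun j' _ => by ring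
      _ = ∑ t ∈ T, atom N t j * ∑ j' ∈ univ.filter (fun j' => f' j' = t), (c' j' : ℂ) * φ' j' l :=
          (fiber_sum f' (fun j' => (c' j' : ℂ) * φ' j' l) T hf'T (fun t => atom N t j)).symm
      _ = ∑ t ∈ T, atom N t j * ∑ k ∈ univ.filter (fun k => f k = t), (c k : ℂ) * φ k l :=
          Finset.sum_congr rfl fun t _ => by rw [hB t l]
      _ = ∑ k, atom N (f k) j * ((c k : ℂ) * φ k l) :=
          fiber_sum f (fun k => (c k : ℂ) * φ k l) T hfT (fun t => atom N t j)
      _ = ∑ k, (c k : ℂ) * atom N (f k) j * φ k l :=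
          Finset.sum_congr rfl fun k _ => by ring
  · intro c' f' φ' hc' hf' hφ' hY0'
    have hB := core Ω c f φ hf c' f' φ' hf' Y0 hY0 le_rfl
      (fun m hm l => by rw [← hY0 m l, ← hY0' m l]) hK
    have hmatch := matchup c f φ hc hfdist hφ c' f' φ' hB
    have hsub : Finset.image f Finset.univ ⊆ Finset.image f' Finset.univ := by
      intro t htm
      obtain ⟨k, _, rfl⟩ := Finset.mem_image.mp htm
      obtain ⟨j, hj⟩ := hmatch k
      exact Finset.mem_image.mpr ⟨j, mem_univ j, hj⟩
    have e1 : (Finset.image f Finset.univ).card = K := by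
      rw [Finset.card_image_of_injective _ hfdist, Finset.card_univ, Fintype.card_fin]
    have e2 : (Finset.image f' Finset.univ).card ≤ K :=
      le_trans Finset.card_image_le (by rw [Finset.card_univ, Fintype.card_fin])
    have hcard2 := Finset.card_le_card hsub
    have hinj' : Function.Injective f' := by
      have e3 : (Finset.image f' Finset.univ).card = (Finset.univ : Finset (Fin K)).card := by
        rw [Finset.card_univ, Fintype.card_fin]
        omega
      have := Finset.card_image_iff.mp e3
      intro a b hab
      exact this (Finset.mem_coe.mpr (mem_univ a)) (Finset.mem_coe.mpr (mem_univ b)) hab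
    choose g hg using hmatch
    have ginj : Function.Injective g := fun a b hab => hfdist (by rw [← hg a, ← hg b, hab])
    have gbij := Finite.injective_iff_bijective.mp ginj
    refine ⟨Equiv.ofBijective g gbij, ?_⟩
    intro k
    have hfilt : univ.filter (fun j => f' j = f k) = ({g k} : Finset (Fin K)) := by
      ext j
      simp only [mem_filter, mem_univ, true_and, Finset.mem_singleton]
      rw [← hg k]
      exact hinj'.eq_iff
    have hfiltf : univ.filter (fun k' => f k' = f k) = ({k} : Finset (Fin K)) := by
      ext k'
      simp only [mem_filter, mem_univ, true_and, Finset.mem_singleton]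
      exact hfdist.eq_iff
    have hvec : ∀ l, (c k : ℂ) * φ k l = (c' (g k) : ℂ) * φ' (g k) l := by
      intro l
      have hB2 := hB (f k) l
      rw [hfiltf, hfilt, Finset.sum_singleton, Finset.sum_singleton] at hB2
      exact hB2
    have hnorm : (c k) * (c k) = (c' (g k)) * (c' (g k)) := by
      have h1 : ∀ (u : ℝ) (ψ : Fin L → ℂ), (∑ l, Complex.normSq (ψ l)) = 1 →
          ∑ l, Complex.normSq ((u : ℂ) * ψ l) = u * u := by
        intro u ψ hψ1
        rw [Finset.sum_congr rfl fun l _ => by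
          rw [Complex.normSq_mul, Complex.normSq_ofReal]]
        rw [← Finset.mul_sum, hψ1, mul_one]
      calc (c k) * (c k) = ∑ l, Complex.normSq ((c k : ℂ) * φ k l) := (h1 _ _ (hφ k)).symm
        _ = ∑ l, Complex.normSq ((c' (g k) : ℂ) * φ' (g k) l) :=
            Finset.sum_congr rfl fun l _ => by rw [hvec l]
        _ = (c' (g k)) * (c' (g k)) := h1 _ _ (hφ' (g k))
    have hceq : c' (g k) = c k := by
      rcases mul_self_eq_mul_self_iff.mp hnorm with h | h
      · exact h.symm
      · exfalso
        have := hc k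
        have := hc' (g k)
        linarith
    have hφeq : φ' (g k) = φ k := by
      funext l
      have hv := hvec l
      rw [hceq] at hv
      have hcne : ((c k : ℝ) : ℂ) ≠ 0 := by exact_mod_cast (hc k).ne'
      exact (mul_left_cancel₀ hcne hv).symm
    exact ⟨hg k, hceq, hφeq⟩
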